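/- Suppose n intervals are such that a single interval j has the largest lower bound and does not overlap some intervals, with the remaining n−1 intervals all pairwise overlapping; partition the others into X = intervals overlapping j and B = intervals strictly below j. If |X| = k−1 and |B| = n−k ≥ 2, then interval j lies in every feasible top-k set, and the feasible top-k sets are exactly {j} ∪ A for A ⊆ X ∪ B with |A| = k−1; consequently the maximin optimal marginals are p_j = 1 and p_i = (k−1)/(n−1) for all i ≠ j, which is not a 0-1 vector. -/

import Mathlib

lemma exists_perm_top (n k : ℕ) (hkn : k ≤ n) (S : Finset (Fin n)) (hS : S.card = k)
    (j : Fin n) (hj : j ∈ S) :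
    ∃ σ : Equiv.Perm (Fin n), (σ j : ℕ) = 0 ∧ ∀ t ∈ S, (σ t : ℕ) < k := by
  have h1 : Fintype.card {x // x ∈ S} = k := by simp [Fintype.card_coe, hS]
  have h2 : Fintype.card {x // x ∉ S} = n - k := by
    rw [Fintype.card_subtype_compl]
    simp [Fintype.card_coe, hS]
  let e₁ : {x // x ∈ S} ≃ Fin k := (Fintype.equivFinOfCardEq h1)
  let e₂ : {x // x ∉ S} ≃ Fin (n - k) := Fintype.equivFinOfCardEq h2
  have hzero : 0 < k := hS ▸ Finset.card_pos.2 ⟨j, hj⟩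
  let e₁' : {x // x ∈ S} ≃ Fin k := e₁.trans (Equiv.swap (e₁ ⟨j, hj⟩) ⟨0, hzero⟩)
  have hnk : k + (n - k) = n := Nat.add_sub_cancel' hkn
  let σ : Equiv.Perm (Fin n) :=
    (Equiv.sumCompl (· ∈ S)).symm.trans
      (((e₁'.sumCongr e₂).trans finSumFinEquiv).trans (finCongr hnk))
  have key : ∀ t (ht : t ∈ S), (σ t : ℕ) = (e₁' ⟨t, ht⟩ : ℕ) := by
    intro t ht
    simp [σ, Equiv.sumCompl_symm_apply_of_pos (p := (· ∈ S)) ht]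
  refine ⟨σ, ?_, ?_⟩
  · rw [key j hj]
    simp [e₁']
  · intro t ht
    rw [key t ht]
    exact (e₁' ⟨t, ht⟩).2

lemma exists_subset_small_sum {α : Type*} [DecidableEq α] :
    ∀ (r : ℕ) (S : Finset α) (p : α → ℝ), r ≤ S.card →
    ∃ A ⊆ S, A.card = r ∧ (S.card : ℝ) * ∑ i ∈ A, p i ≤ (r : ℝ) * ∑ i ∈ S, p i := by
  intro r
  induction r with
  | zero => intro S p _; exact ⟨∅, Finset.empty_subset S, rfl, by simp⟩
  | succ r ih =>
    intro S p hr
    rcases eq_or_lt_of_le hr with heq | hlt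
    · exact ⟨S, Finset.Subset.refl S, heq.symm, by rw [heq]⟩
    · have hne : S.Nonempty := Finset.card_pos.1 (by omega)
      obtain ⟨i, hiS, hmin⟩ := S.exists_min_image p hne
      have hcard' : (S.erase i).card = S.card - 1 := Finset.card_erase_of_mem hiS
      have hr' : r ≤ (S.erase i).card := by omega
      obtain ⟨A', hA'sub, hA'card, hA'sum⟩ := ih (S.erase i) p hr'
      refine ⟨insert i A', ?_, ?_, ?_⟩
      · intro x hx
        rcases Finset.mem_insert.1 hx with h | h
        · exact h ▸ hiS
        · exact Finset.erase_subset _ _ (hA'sub h)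
      · rw [Finset.card_insert_of_notMem (fun h => (Finset.mem_erase.1 (hA'sub h)).1 rfl), hA'card]
      · have hiA' : i ∉ A' := fun h => (Finset.mem_erase.1 (hA'sub h)).1 rfl
        rw [Finset.sum_insert hiA']
        have hsumS : ∑ x ∈ S, p x = p i + ∑ x ∈ S.erase i, p x :=
          (Finset.add_sum_erase S p hiS).symm
        have hpi : ((S.erase i).card : ℝ) * p i ≤ ∑ x ∈ S.erase i, p x := by
          have := Finset.card_nsmul_le_sum (S.erase i) p (p i)
            (fun x hx => hmin x (Finset.mem_erase.1 hx).2)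
          simpa [nsmul_eq_mul] using this
        set m : ℕ := S.card with hm
        have hm2 : (S.erase i).card = m - 1 := hcard'
        rw [hm2] at hpi hA'sum
        have hmge : r + 2 ≤ m := by omega
        have hmr : ((m : ℝ) - 1) = ((m - 1 : ℕ) : ℝ) := by
          have : (1:ℕ) ≤ m := by omega
          push_cast [this]; ring
        rw [← hmr] at hpi hA'sum
        rw [hsumS]
        have hmpos : (0:ℝ) < (m:ℝ) - 1 := by
          have : (r:ℝ) + 2 ≤ (m:ℝ) := by exact_mod_cast hmge
          nlinarith
        push_cast
        nlinarith [mul_le_mul_of_nonneg_left hA'sum (by positivity : (0:ℝ) ≤ (m:ℝ)),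
          mul_le_mul_of_nonneg_left hpi (show (0:ℝ) ≤ (m:ℝ) - r - 1 by
            have : (r:ℝ) + 2 ≤ (m:ℝ) := by exact_mod_cast hmge
            linarith), hmpos]
def FeasiblePerm (n : ℕ) (l u : Fin n → ℝ) : Set (Equiv.Perm (Fin n)) :=
  {σ | ∀ i j : Fin n, l i > u j → σ i < σ j}

/-- Feasible top-`k` sets (0-indexed ranks). -/
def FeasibleTopK (n k : ℕ) (l u : Fin n → ℝ) : Set (Finset (Fin n)) :=
  {T | T.card = k ∧ ∃ σ ∈ FeasiblePerm n l u, ∀ j ∈ T, (σ j : ℕ) < k}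

/-- Worst-case objective. -/
noncomputable def wcObj (n k : ℕ) (l u : Fin n → ℝ) (p : Fin n → ℝ) : ℝ :=
  sInf {x : ℝ | ∃ T ∈ FeasibleTopK n k l u, x = ∑ i ∈ T, p i}

/-- one interval `j` with the largest lower bound; the other intervals
pairwise overlap and split into `X` (overlapping `j`, `|X| = k-1`) and `B` (strictly
below `j`, `|B| = n-k ≥ 2`). Then `j` is in every feasible top-`k` set, the feasible
top-`k` sets are exactly `{j} ∪ A` for `(k-1)`-subsets `A ⊆ X ∪ B`, and the marginals
`p j = 1`, `p i = (k-1)/(n-1)` for `i ≠ j` are maximin optimal — and are not a 0-1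
vector. -/
theorem single_top_interval_optimal (n k : ℕ) (hk : 2 ≤ k) (hkn : k + 2 ≤ n)
    (l u : Fin n → ℝ) (hvalid : ∀ i, l i ≤ u i)
    (j : Fin n) (X B : Finset (Fin n))
    (hpart : X ∪ B = Finset.univ.erase j) (hdisj : Disjoint X B)
    (hjtop : ∀ i : Fin n, l i ≤ l j)
    (hX : ∀ x ∈ X, l j ≤ u x ∧ l x ≤ u j)
    (hB : ∀ b ∈ B, l j > u b)
    (hrest : ∀ x ∈ X ∪ B, ∀ y ∈ X ∪ B, x ≠ y → l x ≤ u y)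
    (hXcard : X.card = k - 1) (hBcard : B.card = n - k) :
    (∀ T ∈ FeasibleTopK n k l u, j ∈ T) ∧
    (FeasibleTopK n k l u =
      {T | ∃ A ⊆ X ∪ B, A.card = k - 1 ∧ T = insert j A}) ∧
    ((∀ i, 0 ≤ (fun i : Fin n => if i = j then (1 : ℝ) else ((k : ℝ) - 1) / ((n : ℝ) - 1)) i ∧
        (fun i : Fin n => if i = j then (1 : ℝ) else ((k : ℝ) - 1) / ((n : ℝ) - 1)) i ≤ 1) ∧
      (∑ i, (fun i : Fin n => if i = j then (1 : ℝ) else ((k : ℝ) - 1) / ((n : ℝ) - 1)) i = (k : ℝ)) ∧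
      (∀ p : Fin n → ℝ, (∀ i, 0 ≤ p i ∧ p i ≤ 1) → ∑ i, p i = (k : ℝ) →
        wcObj n k l u p ≤
          wcObj n k l u (fun i => if i = j then (1 : ℝ) else ((k : ℝ) - 1) / ((n : ℝ) - 1)))) ∧
    (∃ i : Fin n,
      (fun i : Fin n => if i = j then (1 : ℝ) else ((k : ℝ) - 1) / ((n : ℝ) - 1)) i ≠ 0 ∧
      (fun i : Fin n => if i = j then (1 : ℝ) else ((k : ℝ) - 1) / ((n : ℝ) - 1)) i ≠ 1) := by
  
  have hn4 : 4 ≤ n := by omega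
  have huniv : ∀ i : Fin n, i ≠ j → i ∈ X ∪ B := by
    intro i hi
    rw [hpart]
    exact Finset.mem_erase.2 ⟨hi, Finset.mem_univ i⟩
  have hjXB : j ∉ X ∪ B := by
    rw [hpart]; exact fun h => (Finset.mem_erase.1 h).1 rfl
  have cardXB : (X ∪ B).card = n - 1 := by
    rw [hpart, Finset.card_erase_of_mem (Finset.mem_univ j), Finset.card_univ, Fintype.card_fin]
  -- Part 1: j is in every feasible top-k set.
  have hmem : ∀ T ∈ FeasibleTopK n k l u, j ∈ T := by
    rintro T ⟨hcard, σ, hσ, htop⟩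
    have hσj : (σ j : ℕ) < k := by
      by_contra h
      push_neg at h
      have hTsub : T ⊆ X ∪ B := by
        intro t ht
        refine huniv t fun hteq => ?_
        exact absurd (htop t ht) (by rw [hteq]; omega)
      have hbex : ∃ b ∈ T, b ∈ B := by
        by_contra hb
        push_neg at hb
        have hTX : T ⊆ X := fun t ht =>
          (Finset.mem_union.1 (hTsub ht)).resolve_right (hb t ht)
        have := Finset.card_le_card hTX
        omega
      obtain ⟨b, hbT, hbB⟩ := hbex
      have h1 : σ j < σ b := hσ j b (hB b hbB)
      have h2 : (σ b : ℕ) < k := htop b hbT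
      have h3 : (σ j : ℕ) < (σ b : ℕ) := h1
      omega
    -- image argument
    have hfilter : (Finset.univ.filter (fun i : Fin n => (i : ℕ) < k)) =
        (Finset.range k).attachFin (fun m hm => lt_of_lt_of_le (Finset.mem_range.1 hm) (by omega)) := by
      ext a
      simp [Finset.mem_attachFin, Finset.mem_range]
    have hfcard : (Finset.univ.filter (fun i : Fin n => (i : ℕ) < k)).card = k := by
      rw [hfilter, Finset.card_attachFin, Finset.card_range]
    have himg : T.image σ ⊆ Finset.univ.filter (fun i : Fin n => (i : ℕ) < k) := by
      intro x hx
      obtain ⟨t, ht, rfl⟩ := Finset.mem_image.1 hx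
      exact Finset.mem_filter.2 ⟨Finset.mem_univ _, htop t ht⟩
    have hicard : (T.image σ).card = k := by
      rw [Finset.card_image_of_injective T σ.injective, hcard]
    have heq : T.image σ = Finset.univ.filter (fun i : Fin n => (i : ℕ) < k) :=
      Finset.eq_of_subset_of_card_le himg (by omega)
    have hσjmem : σ j ∈ T.image σ := by
      rw [heq]
      exact Finset.mem_filter.2 ⟨Finset.mem_univ _, hσj⟩
    obtain ⟨t, ht, hteq⟩ := Finset.mem_image.1 hσjmem
    rwa [← σ.injective hteq]
  -- Part 2: characterization
  have hchar : FeasibleTopK n k l u =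
      {T | ∃ A ⊆ X ∪ B, A.card = k - 1 ∧ T = insert j A} := by
    ext T
    constructor
    · intro hT
      have hjT := hmem T hT
      obtain ⟨hcard, -⟩ := hT
      refine ⟨T.erase j, ?_, ?_, (Finset.insert_erase hjT).symm⟩
      · intro t ht
        exact huniv t (Finset.mem_erase.1 ht).1
      · rw [Finset.card_erase_of_mem hjT, hcard]
    · rintro ⟨A, hAsub, hAcard, rfl⟩
      have hjA : j ∉ A := fun h => hjXB (hAsub h)
      have hTcard : (insert j A).card = k := by
        rw [Finset.card_insert_of_notMem hjA, hAcard]; omega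
      obtain ⟨σ, hσ0, hσtop⟩ := exists_perm_top n k (by omega) (insert j A) hTcard j
        (Finset.mem_insert_self j A)
      refine ⟨hTcard, σ, ?_, fun t ht => hσtop t ht⟩
      intro a b hab
      have hbj : b ≠ j := by
        intro hbeq
        rw [hbeq] at hab
        exact absurd hab (not_lt.2 ((hjtop a).trans (hvalid j)))
      have hb' : b ∈ X ∪ B := huniv b hbj
      by_cases haj : a = j
      · subst haj
        have hbB : b ∈ B := by
          rcases Finset.mem_union.1 hb' with h | h
          · exact absurd hab (not_lt.2 (hX b h).1)
          · exact h
        have hσb : (σ b : ℕ) ≠ 0 := by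
          intro h0
          exact hbj (σ.injective (Fin.ext (by rw [h0, hσ0]))).symm
        show σ a < σ b
        rw [Fin.lt_def, hσ0]
        omega
      · have ha' : a ∈ X ∪ B := huniv a haj
        have hne : a ≠ b := by
          rintro rfl
          exact absurd hab (not_lt.2 (hvalid a))
        exact absurd hab (not_lt.2 (hrest a ha' b hb' hne))
  refine ⟨hmem, hchar, ?_, ?_⟩
  · -- Part 3
    have hnpos : (0:ℝ) < (n:ℝ) - 1 := by
      have : (4:ℝ) ≤ (n:ℝ) := by exact_mod_cast hn4
      linarith
    have hkR : (1:ℝ) ≤ (k:ℝ) - 1 := by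
      have : (2:ℝ) ≤ (k:ℝ) := by exact_mod_cast hk
      linarith
    have hknR : (k:ℝ) + 2 ≤ (n:ℝ) := by exact_mod_cast hkn
    set c : ℝ := ((k:ℝ) - 1) / ((n:ℝ) - 1) with hc
    have hc0 : 0 < c := div_pos (by linarith) hnpos
    have hc1 : c < 1 := (div_lt_one hnpos).2 (by linarith)
    have hcmul : ((n:ℝ) - 1) * c = (k:ℝ) - 1 := by
      rw [hc]; field_simp
    refine ⟨?_, ?_, ?_⟩
    · intro i
      by_cases hi : i = j <;> simp [hi] <;> constructor <;> linarith
    · rw [← Finset.sum_erase_add Finset.univ _ (Finset.mem_univ j)]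
      have h1 : ∑ i ∈ Finset.univ.erase j,
          (fun i : Fin n => if i = j then (1:ℝ) else c) i = ((n:ℝ) - 1) * c := by
        rw [Finset.sum_congr rfl (fun i hi => if_neg (Finset.mem_erase.1 hi).1),
          Finset.sum_const, Finset.card_erase_of_mem (Finset.mem_univ j),
          Finset.card_univ, Fintype.card_fin, nsmul_eq_mul]
        congr 1
        have : (1:ℕ) ≤ n := by omega
        push_cast [this]
        ring
      rw [h1, if_pos rfl, hcmul]
      ring
    · intro p hp hsum
      -- value achieved by the proposed marginals
      have hsumval : ∀ A ⊆ X ∪ B, A.card = k - 1 →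
          ∑ i ∈ insert j A, (fun i : Fin n => if i = j then (1:ℝ) else c) i
            = 1 + ((k:ℝ) - 1) * c := by
        intro A hAsub hAcard
        have hjA : j ∉ A := fun h => hjXB (hAsub h)
        rw [Finset.sum_insert hjA, if_pos rfl]
        congr 1
        rw [Finset.sum_congr rfl (fun i hi => if_neg (fun h => hjA (by rw [← h]; exact hi))),
          Finset.sum_const, hAcard, nsmul_eq_mul]
        congr 1
        have : (1:ℕ) ≤ k := by omega
        push_cast [this]
        ring
      have hwstar : wcObj n k l u (fun i : Fin n => if i = j then (1:ℝ) else c)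
          = 1 + ((k:ℝ) - 1) * c := by
        have hset : {x : ℝ | ∃ T ∈ FeasibleTopK n k l u,
            x = ∑ i ∈ T, (fun i : Fin n => if i = j then (1:ℝ) else c) i}
            = {1 + ((k:ℝ) - 1) * c} := by
          ext x
          simp only [Set.mem_setOf_eq, Set.mem_singleton_iff]
          constructor
          · rintro ⟨T, hT, rfl⟩
            rw [hchar] at hT
            obtain ⟨A, hAsub, hAcard, rfl⟩ := hT
            exact hsumval A hAsub hAcard
          · rintro rfl
            refine ⟨insert j X, ?_, (hsumval X Finset.subset_union_left hXcard).symm⟩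
            rw [hchar]
            exact ⟨X, Finset.subset_union_left, hXcard, rfl⟩
        rw [wcObj, hset, csInf_singleton]
      rw [hwstar]
      -- pick a cheap (k-1)-subset
      obtain ⟨A, hAsub, hAcard, hAsum⟩ :=
        exists_subset_small_sum (k - 1) (X ∪ B) p (by rw [cardXB]; omega)
      have hjA : j ∉ A := fun h => hjXB (hAsub h)
      have hTfeas : insert j A ∈ FeasibleTopK n k l u := by
        rw [hchar]
        exact ⟨A, hAsub, hAcard, rfl⟩
      have hfin : {x : ℝ | ∃ T ∈ FeasibleTopK n k l u, x = ∑ i ∈ T, p i}.Finite := by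
        apply Set.Finite.subset ((Set.toFinite (FeasibleTopK n k l u)).image
          (fun T => ∑ i ∈ T, p i))
        rintro x ⟨T, hT, rfl⟩
        exact ⟨T, hT, rfl⟩
      have h1 : wcObj n k l u p ≤ ∑ i ∈ insert j A, p i :=
        csInf_le hfin.bddBelow ⟨insert j A, hTfeas, rfl⟩
      rw [Finset.sum_insert hjA] at h1
      refine h1.trans ?_
      -- arithmetic
      have hXBsum : ∑ i ∈ X ∪ B, p i = (k:ℝ) - p j := by
        have := Finset.add_sum_erase Finset.univ p (Finset.mem_univ j)
        rw [← hpart] at this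
        rw [← hsum, ← this]
        ring
      rw [cardXB, hXBsum] at hAsum
      have hcast1 : ((n - 1 : ℕ) : ℝ) = (n:ℝ) - 1 := by
        have : (1:ℕ) ≤ n := by omega
        push_cast [this]; ring
      have hcast2 : ((k - 1 : ℕ) : ℝ) = (k:ℝ) - 1 := by
        have : (1:ℕ) ≤ k := by omega
        push_cast [this]; ring
      rw [hcast1, hcast2] at hAsum
      have hpj1 : p j ≤ 1 := (hp j).2
      have hpj0 : 0 ≤ p j := (hp j).1
      -- (n-1) * (p j + ∑ A) ≤ (n-1) * (1 + (k-1)*c)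
      rw [← mul_le_mul_iff_of_pos_left hnpos]
      have hrhs : ((n:ℝ) - 1) * (1 + ((k:ℝ) - 1) * c)
          = ((n:ℝ) - 1) + ((k:ℝ) - 1) * (((n:ℝ) - 1) * c) := by ring
      rw [hrhs, hcmul]
      nlinarith [hAsum, mul_nonneg (sub_nonneg.2 hpj1) (show (0:ℝ) ≤ (n:ℝ) - (k:ℝ) by linarith)]
  · -- Part 4
    have hnpos : (0:ℝ) < (n:ℝ) - 1 := by
      have : (4:ℝ) ≤ (n:ℝ) := by exact_mod_cast (by omega : 4 ≤ n)
      linarith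
    have hkR : (1:ℝ) ≤ (k:ℝ) - 1 := by
      have : (2:ℝ) ≤ (k:ℝ) := by exact_mod_cast hk
      linarith
    have hknR : (k:ℝ) + 2 ≤ (n:ℝ) := by exact_mod_cast hkn
    have hc0 : 0 < ((k:ℝ) - 1) / ((n:ℝ) - 1) := div_pos (by linarith) hnpos
    have hc1 : ((k:ℝ) - 1) / ((n:ℝ) - 1) < 1 := (div_lt_one hnpos).2 (by linarith)
    have : 1 < Fintype.card (Fin n) := by simp; omega
    obtain ⟨i, hi⟩ := Fintype.exists_ne_of_one_lt_card this j
    exact ⟨i, by simp only [if_neg hi]; exact ne_of_gt hc0,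
      by simp only [if_neg hi]; exact ne_of_lt hc1⟩
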